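/- Let G be a connected finite simple graph with double vertex-weights a, b : V(G) → ℝ⁺, and let {F₁, ..., F_r} be a partition of E(G) such that for every pair u,v of vertices, d_G(u,v) = Σᵢ d_{G/Fᵢ}(ℓᵢ(u), ℓᵢ(v)), where ℓᵢ(u) denotes the connected component of G∖Fᵢ containing u and G/Fᵢ is the quotient graph. Then W(G,a,b) = Σᵢ W(G/Fᵢ, aᵢ, bᵢ), where aᵢ(C) = Σ_{x∈C} a(x) and bᵢ(C) = Σ_{x∈C} b(x) for each component C of G∖Fᵢ. -/

import Mathlib

open Finset
open scoped Classical

noncomputable section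

variable {V : Type*}

noncomputable instance fintypeCC [Fintype V] (G : SimpleGraph V) : Fintype G.ConnectedComponent :=
  @Fintype.ofFinite _ (Finite.of_surjective G.connectedComponentMk fun C => C.exists_rep)

/-- The Wiener index of a double vertex-weighted graph,
`W(G,a,b) = ∑_{{u,v}⊆V(G)} (a(u)b(v) + a(v)b(u)) d(u,v)`. -/
noncomputable def SimpleGraph.wienerDW [Fintype V] (G : SimpleGraph V) (a b : V → ℝ) : ℝ :=
  (1 / 2) * ∑ u : V, ∑ v : V, (a u * b v + a v * b u) * (G.dist u v : ℝ)

/-- The quotient graph `G/F`: vertices are the connected components of `G ∖ F`, two components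
being adjacent if some vertex of one is adjacent in `G` to some vertex of the other. -/
def SimpleGraph.quotientGraph (G : SimpleGraph V) (F : Set (Sym2 V)) :
    SimpleGraph (G.deleteEdges F).ConnectedComponent where
  Adj C D := C ≠ D ∧ ∃ u v : V, G.Adj u v ∧
    (G.deleteEdges F).connectedComponentMk u = C ∧ (G.deleteEdges F).connectedComponentMk v = D
  symm := ⟨by
    rintro C D ⟨hne, u, v, h, hu, hv⟩
    exact ⟨hne.symm, v, u, h.symm, hv, hu⟩⟩
  loopless := ⟨by rintro C ⟨hne, -⟩; exact hne rfl⟩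

/-- If `(G,a,b)` is a connected double vertex-weighted graph and
`{F₁,…,F_r}` is a partition of `E(G)` satisfying the distance decomposition
`d_G(u,v) = ∑ᵢ d_{G/Fᵢ}(ℓᵢ(u),ℓᵢ(v))`, then `W(G,a,b) = ∑ᵢ W(G/Fᵢ, aᵢ, bᵢ)`, where
`aᵢ(C) = ∑_{x∈C} a(x)` and `bᵢ(C) = ∑_{x∈C} b(x)` for each component `C` of `G ∖ Fᵢ`. -/

lemma collapse {α β : Type*} [Fintype β] [DecidableEq β] (ℓ : α → β) (x : α) (c : ℝ) (t : β → ℝ) :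
    ∑ C : β, (if ℓ x = C then c else 0) * t C = c * t (ℓ x) := by
  simp [ite_mul, Finset.sum_ite_eq]

lemma key {α β : Type*} [Fintype α] [Fintype β] [DecidableEq β] (ℓ : α → β) (a b : α → ℝ)
    (φ : β → β → ℝ) :
    ∑ C : β, ∑ D : β, ((∑ x, if ℓ x = C then a x else 0) * (∑ x, if ℓ x = D then b x else 0)
      + (∑ x, if ℓ x = D then a x else 0) * (∑ x, if ℓ x = C then b x else 0)) * φ C D
    = ∑ u, ∑ v, (a u * b v + a v * b u) * φ (ℓ u) (ℓ v) := by
  have h1 : ∀ C D, ((∑ x, if ℓ x = C then a x else 0) * (∑ x, if ℓ x = D then b x else 0)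
      + (∑ x, if ℓ x = D then a x else 0) * (∑ x, if ℓ x = C then b x else 0)) * φ C D
      = ∑ u, ∑ v, ((if ℓ u = C then a u else 0) * (if ℓ v = D then b v else 0)
          + (if ℓ v = D then a v else 0) * (if ℓ u = C then b u else 0)) * φ C D := by
    intro C D
    rw [Finset.sum_mul_sum, Finset.sum_mul_sum]
    rw [Finset.sum_comm (s := Finset.univ) (t := Finset.univ) (f := fun x y => (if ℓ x = D then a x else 0) * (if ℓ y = C then b y else 0))]
    rw [← Finset.sum_add_distrib, Finset.sum_mul]
    refine Finset.sum_congr rfl fun u _ => ?_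
    rw [← Finset.sum_add_distrib, Finset.sum_mul]
  simp_rw [h1]
  calc ∑ C : β, ∑ D : β, ∑ u, ∑ v, ((if ℓ u = C then a u else 0) * (if ℓ v = D then b v else 0)
          + (if ℓ v = D then a v else 0) * (if ℓ u = C then b u else 0)) * φ C D
      = ∑ C : β, ∑ u, ∑ D : β, ∑ v, ((if ℓ u = C then a u else 0) * (if ℓ v = D then b v else 0)
          + (if ℓ v = D then a v else 0) * (if ℓ u = C then b u else 0)) * φ C D :=
        Finset.sum_congr rfl fun C _ => Finset.sum_comm
    _ = ∑ C : β, ∑ u, ∑ v, ∑ D : β, ((if ℓ u = C then a u else 0) * (if ℓ v = D then b v else 0)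
          + (if ℓ v = D then a v else 0) * (if ℓ u = C then b u else 0)) * φ C D :=
        Finset.sum_congr rfl fun C _ => Finset.sum_congr rfl fun u _ => Finset.sum_comm
    _ = ∑ u, ∑ C : β, ∑ v, ∑ D : β, ((if ℓ u = C then a u else 0) * (if ℓ v = D then b v else 0)
          + (if ℓ v = D then a v else 0) * (if ℓ u = C then b u else 0)) * φ C D :=
        Finset.sum_comm
    _ = ∑ u, ∑ v, ∑ C : β, ∑ D : β, ((if ℓ u = C then a u else 0) * (if ℓ v = D then b v else 0)
          + (if ℓ v = D then a v else 0) * (if ℓ u = C then b u else 0)) * φ C D :=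
        Finset.sum_congr rfl fun u _ => Finset.sum_comm
    _ = ∑ u, ∑ v, (a u * b v + a v * b u) * φ (ℓ u) (ℓ v) := by
        refine Finset.sum_congr rfl fun u _ => Finset.sum_congr rfl fun v _ => ?_
        simp [add_mul, ite_mul, mul_ite, mul_zero, zero_mul, Finset.sum_add_distrib,
          Finset.sum_ite_eq]


theorem wienerDW_eq_sum_quotients [Fintype V] (G : SimpleGraph V) (hG : G.Connected)
    (a b : V → ℝ) (ha : ∀ v, 0 < a v) (hb : ∀ v, 0 < b v)
    (r : ℕ) (F : Fin r → Set (Sym2 V))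
    (hsub : ∀ i, F i ⊆ G.edgeSet)
    (hdisj : ∀ i j, i ≠ j → Disjoint (F i) (F j))
    (hcover : ∀ e ∈ G.edgeSet, ∃ i, e ∈ F i)
    (hdist : ∀ u v : V, G.dist u v =
      ∑ i, (G.quotientGraph (F i)).dist
        ((G.deleteEdges (F i)).connectedComponentMk u)
        ((G.deleteEdges (F i)).connectedComponentMk v)) :
    G.wienerDW a b = ∑ i, (G.quotientGraph (F i)).wienerDW
      (fun C => ∑ x : V, if (G.deleteEdges (F i)).connectedComponentMk x = C then a x else 0)
      (fun C => ∑ x : V, if (G.deleteEdges (F i)).connectedComponentMk x = C then b x else 0) := by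
  have hrhs : ∀ i : Fin r, (G.quotientGraph (F i)).wienerDW
      (fun C => ∑ x : V, if (G.deleteEdges (F i)).connectedComponentMk x = C then a x else 0)
      (fun C => ∑ x : V, if (G.deleteEdges (F i)).connectedComponentMk x = C then b x else 0)
      = 1/2 * ∑ u : V, ∑ v : V, (a u * b v + a v * b u) *
          ((G.quotientGraph (F i)).dist ((G.deleteEdges (F i)).connectedComponentMk u)
            ((G.deleteEdges (F i)).connectedComponentMk v) : ℝ) := by
    intro i
    rw [SimpleGraph.wienerDW]
    norm_num
    exact key ((G.deleteEdges (F i)).connectedComponentMk) a b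
      (fun C D => ((G.quotientGraph (F i)).dist C D : ℝ))
  simp_rw [hrhs]
  rw [SimpleGraph.wienerDW, ← Finset.mul_sum]
  congr 1
  simp_rw [hdist, Nat.cast_sum, Finset.mul_sum]
  trans ∑ u : V, ∑ i : Fin r, ∑ v : V, (a u * b v + a v * b u) *
      ((G.quotientGraph (F i)).dist ((G.deleteEdges (F i)).connectedComponentMk u)
        ((G.deleteEdges (F i)).connectedComponentMk v) : ℝ)
  · exact Finset.sum_congr rfl fun u _ => Finset.sum_comm
  · exact Finset.sum_comm

end
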